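/- Let {z^k = (x^k, y^k)} be PDHG iterates with step-size η < 1/‖A‖₂. Then for every k ≥ 0 and every z = (x,y) with x ≥ 0, L(x^{k+1}, y) − L(x, y^{k+1}) ≤ (1/2)‖z^k − z‖_P² − (1/2)‖z^{k+1} − z‖_P². -/
import Mathlib


open Matrix
open scoped BigOperators

noncomputable section

/-- Euclidean norm of a vector in `ℝᵏ`. -/
def nrm {k : ℕ} (v : Fin k → ℝ) : ℝ := Real.sqrt (v ⬝ᵥ v)

/-- Euclidean norm of a primal-dual pair `z = (x, y) ∈ ℝⁿ × ℝᵐ`. -/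
def nrmP {n m : ℕ} (z : (Fin n → ℝ) × (Fin m → ℝ)) : ℝ :=
  Real.sqrt (z.1 ⬝ᵥ z.1 + z.2 ⬝ᵥ z.2)

/-- Spectral norm `‖A‖₂` of a matrix: the supremum of `‖Ax‖₂` over unit vectors `x`. -/
def specNorm {n m : ℕ} (A : Matrix (Fin m) (Fin n) ℝ) : ℝ :=
  sSup {r | ∃ x : Fin n → ℝ, nrm x = 1 ∧ r = nrm (A *ᵥ x)}

/-- Componentwise positive part `[v]⁺`. -/
def posPt {k : ℕ} (v : Fin k → ℝ) : Fin k → ℝ := fun i => max (v i) 0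

/-- The Lagrangian `L(x,y) = cᵀx − yᵀAx + bᵀy` of the standard-form LP. -/
def Lag {n m : ℕ} (A : Matrix (Fin m) (Fin n) ℝ) (b : Fin m → ℝ) (c : Fin n → ℝ)
    (x : Fin n → ℝ) (y : Fin m → ℝ) : ℝ :=
  c ⬝ᵥ x - y ⬝ᵥ (A *ᵥ x) + b ⬝ᵥ y

/-- One PDHG iteration with (equal) step-size `η`:
`x⁺ = proj_{ℝ₊ⁿ}(x + ηAᵀy − ηc)`, `y⁺ = y − ηA(2x⁺ − x) + ηb`. -/
def pdhgStep {n m : ℕ} (A : Matrix (Fin m) (Fin n) ℝ) (b : Fin m → ℝ) (c : Fin n → ℝ)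
    (η : ℝ) (z : (Fin n → ℝ) × (Fin m → ℝ)) : (Fin n → ℝ) × (Fin m → ℝ) :=
  let x' := posPt (z.1 + η • (Aᵀ *ᵥ z.2) - η • c)
  (x', z.2 - η • (A *ᵥ ((2 : ℝ) • x' - z.1)) + η • b)

/-- Quadratic form `wᵀPw` of `P = [[(1/η)Iₙ, Aᵀ], [A, (1/η)Iₘ]]`. -/
def Pquad {n m : ℕ} (A : Matrix (Fin m) (Fin n) ℝ) (η : ℝ)
    (w : (Fin n → ℝ) × (Fin m → ℝ)) : ℝ :=
  (1 / η) * (w.1 ⬝ᵥ w.1) + 2 * (w.2 ⬝ᵥ (A *ᵥ w.1)) + (1 / η) * (w.2 ⬝ᵥ w.2)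

/-- The seminorm `‖w‖_P = √(wᵀPw)`. -/
def Pnorm {n m : ℕ} (A : Matrix (Fin m) (Fin n) ℝ) (η : ℝ)
    (w : (Fin n → ℝ) × (Fin m → ℝ)) : ℝ := Real.sqrt (Pquad A η w)

/-- `σ_max(P)`: the largest eigenvalue of the symmetric matrix `P`, i.e. the
supremum of the Rayleigh quotient `wᵀPw` over unit vectors `w`. -/
def sigmaMaxP {n m : ℕ} (A : Matrix (Fin m) (Fin n) ℝ) (η : ℝ) : ℝ :=
  sSup {r | ∃ w : (Fin n → ℝ) × (Fin m → ℝ), nrmP w = 1 ∧ r = Pquad A η w}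

/-- Application of the matrix `P`: `Pw = ((1/η)w₁ + Aᵀw₂, Aw₁ + (1/η)w₂)`. -/
def Papply {n m : ℕ} (A : Matrix (Fin m) (Fin n) ℝ) (η : ℝ)
    (w : (Fin n → ℝ) × (Fin m → ℝ)) : (Fin n → ℝ) × (Fin m → ℝ) :=
  ((1 / η) • w.1 + Aᵀ *ᵥ w.2, A *ᵥ w.1 + (1 / η) • w.2)

/-- The set `Z*` of saddle points of `L` over `Z = ℝ₊ⁿ × ℝᵐ`:
`L(x*, y) ≤ L(x*, y*) ≤ L(x, y*)` for all `(x, y) ∈ Z`. -/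
def saddleSet {n m : ℕ} (A : Matrix (Fin m) (Fin n) ℝ) (b : Fin m → ℝ) (c : Fin n → ℝ) :
    Set ((Fin n → ℝ) × (Fin m → ℝ)) :=
  {z | (∀ i, 0 ≤ z.1 i) ∧
    (∀ y : Fin m → ℝ, Lag A b c z.1 y ≤ Lag A b c z.1 z.2) ∧
    (∀ x : Fin n → ℝ, (∀ i, 0 ≤ x i) → Lag A b c z.1 z.2 ≤ Lag A b c x z.2)}

/-- Euclidean distance `dist₂(z, S)` from `z` to a set `S`. -/
def dist2 {n m : ℕ} (z : (Fin n → ℝ) × (Fin m → ℝ))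
    (S : Set ((Fin n → ℝ) × (Fin m → ℝ))) : ℝ :=
  sInf ((fun w => nrmP (z - w)) '' S)

/-- `P`-seminorm distance `dist_P(z, S)` from `z` to a set `S`. -/
def distP {n m : ℕ} (A : Matrix (Fin m) (Fin n) ℝ) (η : ℝ)
    (z : (Fin n → ℝ) × (Fin m → ℝ)) (S : Set ((Fin n → ℝ) × (Fin m → ℝ))) : ℝ :=
  sInf ((fun w => Pnorm A η (z - w)) '' S)

/-- KKT error `KKT(z) = ‖(Ax − b, [Aᵀy − c]⁺, [cᵀx − bᵀy]⁺)‖₂`. -/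
def KKTerr {n m : ℕ} (A : Matrix (Fin m) (Fin n) ℝ) (b : Fin m → ℝ) (c : Fin n → ℝ)
    (z : (Fin n → ℝ) × (Fin m → ℝ)) : ℝ :=
  Real.sqrt ((A *ᵥ z.1 - b) ⬝ᵥ (A *ᵥ z.1 - b)
    + posPt (Aᵀ *ᵥ z.2 - c) ⬝ᵥ posPt (Aᵀ *ᵥ z.2 - c)
    + (max (c ⬝ᵥ z.1 - b ⬝ᵥ z.2) 0) ^ 2)

/-- Normalized duality gap `ρ_r(z) = sup_{ẑ ∈ W_r(z)} (L(x, ŷ) − L(x̂, y)) / r`,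
where `W_r(z) = {ẑ ∈ Z : ‖z − ẑ‖₂ ≤ r}`. -/
def rhoGap {n m : ℕ} (A : Matrix (Fin m) (Fin n) ℝ) (b : Fin m → ℝ) (c : Fin n → ℝ)
    (r : ℝ) (z : (Fin n → ℝ) × (Fin m → ℝ)) : ℝ :=
  sSup {g | ∃ w : (Fin n → ℝ) × (Fin m → ℝ), (∀ i, 0 ≤ w.1 i) ∧ nrmP (z - w) ≤ r ∧
    g = (Lag A b c z.1 w.2 - Lag A b c w.1 z.2) / r}

/-- The subdifferential operator
`F(z) = {(c − Aᵀy + g, Ax − b) : g ∈ N_{ℝ₊ⁿ}(x)}`, where `N_{ℝ₊ⁿ}(x)` is the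
normal cone of `ℝ₊ⁿ` at `x ∈ ℝ₊ⁿ` (the set is empty if `x ∉ ℝ₊ⁿ`). -/
def Fop {n m : ℕ} (A : Matrix (Fin m) (Fin n) ℝ) (b : Fin m → ℝ) (c : Fin n → ℝ)
    (z : (Fin n → ℝ) × (Fin m → ℝ)) : Set ((Fin n → ℝ) × (Fin m → ℝ)) :=
  {w | (∀ i, 0 ≤ z.1 i) ∧ ∃ g : Fin n → ℝ,
    (∀ u : Fin n → ℝ, (∀ i, 0 ≤ u i) → g ⬝ᵥ (u - z.1) ≤ 0) ∧
    w = (c - Aᵀ *ᵥ z.2 + g, A *ᵥ z.1 - b)}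

/-- `dist₂(0, F(z)) = inf {‖w‖₂ : w ∈ F(z)}`. -/
def distF {n m : ℕ} (A : Matrix (Fin m) (Fin n) ℝ) (b : Fin m → ℝ) (c : Fin n → ℝ)
    (z : (Fin n → ℝ) × (Fin m → ℝ)) : ℝ :=
  sInf (nrmP '' Fop A b c z)

end


section helperlemmas
open Matrix

private lemma dot_self_nonneg' {k : ℕ} (v : Fin k → ℝ) : 0 ≤ v ⬝ᵥ v :=
  Finset.sum_nonneg fun i _ => mul_self_nonneg (v i)

private lemma nrm_nonneg'' {k : ℕ} (v : Fin k → ℝ) : 0 ≤ nrm v := Real.sqrt_nonneg _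

private lemma nrm_sq'' {k : ℕ} (v : Fin k → ℝ) : nrm v ^ 2 = v ⬝ᵥ v :=
  Real.sq_sqrt (dot_self_nonneg' v)

private lemma dot_ge_neg_nrm {k : ℕ} (v w : Fin k → ℝ) :
    -(nrm v * nrm w) ≤ v ⬝ᵥ w := by
  have h := Finset.sum_mul_sq_le_sq_mul_sq Finset.univ v w
  have e1 : v ⬝ᵥ v = ∑ i, v i ^ 2 := by simp [dotProduct, sq]
  have e2 : w ⬝ᵥ w = ∑ i, w i ^ 2 := by simp [dotProduct, sq]
  have e3 : v ⬝ᵥ w = ∑ i, v i * w i := rfl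
  have h2 : (v ⬝ᵥ w) ^ 2 ≤ (nrm v * nrm w) ^ 2 := by
    rw [mul_pow, nrm_sq'', nrm_sq'', e1, e2, e3]; exact h
  nlinarith [mul_nonneg (nrm_nonneg'' v) (nrm_nonneg'' w)]

private lemma nrm_smul' {k : ℕ} (r : ℝ) (v : Fin k → ℝ) : nrm (r • v) = |r| * nrm v := by
  unfold nrm
  rw [smul_dotProduct, dotProduct_smul, smul_eq_mul, smul_eq_mul, ← mul_assoc,
    Real.sqrt_mul (mul_self_nonneg r), Real.sqrt_mul_self_eq_abs]

private lemma nrm_mulVec_le {n m : ℕ} (A : Matrix (Fin m) (Fin n) ℝ) (u : Fin n → ℝ) :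
    nrm (A *ᵥ u) ≤ specNorm A * nrm u := by
  rcases eq_or_lt_of_le (nrm_nonneg'' u) with h0 | hpos
  · have hu : u = 0 := by
      have h1 : u ⬝ᵥ u = 0 := by
        have h2 := nrm_sq'' u
        rw [← h0] at h2
        simpa using h2.symm
      exact dotProduct_self_eq_zero.mp h1
    simp [hu, nrm, ← h0]
  · have hbdd : BddAbove {r | ∃ x : Fin n → ℝ, nrm x = 1 ∧ r = nrm (A *ᵥ x)} := by
      refine ⟨Real.sqrt (∑ i, ∑ j, A i j ^ 2), ?_⟩
      rintro r ⟨x, hx, rfl⟩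
      have hxx : x ⬝ᵥ x = 1 := by
        have h2 := nrm_sq'' x
        rw [hx] at h2
        simpa using h2.symm
      unfold nrm
      apply Real.sqrt_le_sqrt
      have he : (A *ᵥ x) ⬝ᵥ (A *ᵥ x) = ∑ i, (∑ j, A i j * x j) ^ 2 := by
        simp [Matrix.mulVec, dotProduct, sq]
      rw [he]
      calc ∑ i, (∑ j, A i j * x j) ^ 2
          ≤ ∑ i, (∑ j, A i j ^ 2) * (∑ j, x j ^ 2) := by
            refine Finset.sum_le_sum fun i _ => ?_
            exact Finset.sum_mul_sq_le_sq_mul_sq Finset.univ _ _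
        _ = ∑ i, ∑ j, A i j ^ 2 := by
            have hx1 : (∑ j, x j ^ 2) = 1 := by
              rw [← hxx]; simp [dotProduct, sq]
            simp [hx1]
    have hmem : (nrm u)⁻¹ * nrm (A *ᵥ u) ∈
        {r | ∃ x : Fin n → ℝ, nrm x = 1 ∧ r = nrm (A *ᵥ x)} := by
      refine ⟨(nrm u)⁻¹ • u, ?_, ?_⟩
      · rw [nrm_smul', abs_of_nonneg (inv_nonneg.mpr (le_of_lt hpos)),
          inv_mul_cancel₀ (ne_of_gt hpos)]
      · rw [Matrix.mulVec_smul, nrm_smul', abs_of_nonneg (inv_nonneg.mpr (le_of_lt hpos))]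
    have hle : (nrm u)⁻¹ * nrm (A *ᵥ u) ≤ specNorm A := le_csSup hbdd hmem
    have h3 : nrm u * ((nrm u)⁻¹ * nrm (A *ᵥ u)) ≤ nrm u * specNorm A :=
      mul_le_mul_of_nonneg_left hle (le_of_lt hpos)
    rw [← mul_assoc, mul_inv_cancel₀ (ne_of_gt hpos), one_mul] at h3
    linarith [h3, mul_comm (nrm u) (specNorm A)]

private lemma pquad_nonneg' {n m : ℕ} (A : Matrix (Fin m) (Fin n) ℝ) (η : ℝ)
    (hη0 : 0 < η) (hs : specNorm A < 1 / η) (u : (Fin n → ℝ) × (Fin m → ℝ)) :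
    0 ≤ Pquad A η u := by
  have h1 := nrm_mulVec_le A u.1
  have h2 := dot_ge_neg_nrm u.2 (A *ᵥ u.1)
  have ha := nrm_nonneg'' u.1
  have hb := nrm_nonneg'' u.2
  have e1 := nrm_sq'' u.1
  have e2 := nrm_sq'' u.2
  have hub : 0 < 1 / η := by positivity
  unfold Pquad
  rw [← e1, ← e2]
  nlinarith [mul_nonneg hub.le (sq_nonneg (nrm u.1 - nrm u.2)),
    mul_nonneg (mul_nonneg ha hb) (sub_nonneg.mpr hs.le),
    mul_le_mul_of_nonneg_left h1 hb]

private lemma proj_pt' (a t : ℝ) (ht : 0 ≤ t) : 0 ≤ (max a 0 - a) * (t - max a 0) := by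
  rcases le_total a 0 with h | h
  · rw [max_eq_right h]
    have h2 : 0 ≤ -a := neg_nonneg.mpr h
    nlinarith
  · rw [max_eq_left h]
    simp

private lemma core' {n m : ℕ} (A : Matrix (Fin m) (Fin n) ℝ) (b : Fin m → ℝ) (c : Fin n → ℝ)
    (η : ℝ) (hη0 : 0 < η) (hs : specNorm A < 1 / η)
    (x xh : Fin n → ℝ) (y yh : Fin m → ℝ) (hxh : ∀ i, 0 ≤ xh i) :
    Lag A b c (pdhgStep A b c η (x, y)).1 yh - Lag A b c xh (pdhgStep A b c η (x, y)).2 ≤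
      (1 / 2) * (Pnorm A η ((x, y) - (xh, yh))) ^ 2 -
      (1 / 2) * (Pnorm A η (pdhgStep A b c η (x, y) - (xh, yh))) ^ 2 := by
  have hne : η ≠ 0 := ne_of_gt hη0
  obtain ⟨x', hx'⟩ : ∃ v : Fin n → ℝ, v = posPt (x + η • (Aᵀ *ᵥ y) - η • c) := ⟨_, rfl⟩
  obtain ⟨y', hy'⟩ : ∃ v : Fin m → ℝ, v = y - η • (A *ᵥ ((2:ℝ) • x' - x)) + η • b := ⟨_, rfl⟩
  have hstep : pdhgStep A b c η (x, y) = (x', y') := by rw [hy', hx']; rfl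
  rw [hstep]
  have hq1 : (Pnorm A η ((x, y) - (xh, yh))) ^ 2 = Pquad A η ((x, y) - (xh, yh)) :=
    Real.sq_sqrt (pquad_nonneg' A η hη0 hs _)
  have hq2 : (Pnorm A η ((x', y') - (xh, yh))) ^ 2 = Pquad A η ((x', y') - (xh, yh)) :=
    Real.sq_sqrt (pquad_nonneg' A η hη0 hs _)
  have hq3 : 0 ≤ Pquad A η ((x - x'), (y - y')) := pquad_nonneg' A η hη0 hs _
  rw [hq1, hq2]
  have hc1 : ((x, y) - (xh, yh) : (Fin n → ℝ) × (Fin m → ℝ)) = (x - xh, y - yh) := rfl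
  have hc2 : ((x', y') - (xh, yh) : (Fin n → ℝ) × (Fin m → ℝ)) = (x' - xh, y' - yh) := rfl
  rw [hc1, hc2]
  -- projection inequality
  have H1raw : 0 ≤ (x' - (x + η • (Aᵀ *ᵥ y) - η • c)) ⬝ᵥ (xh - x') := by
    have hd : (x' - (x + η • (Aᵀ *ᵥ y) - η • c)) ⬝ᵥ (xh - x')
        = ∑ i, ((x' - (x + η • (Aᵀ *ᵥ y) - η • c)) i) * ((xh - x') i) := rfl
    rw [hd]
    refine Finset.sum_nonneg fun i _ => ?_
    have hp := proj_pt' ((x + η • (Aᵀ *ᵥ y) - η • c) i) (xh i) (hxh i)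
    simpa [hx', posPt] using hp
  have hvec : x' - (x + η • (Aᵀ *ᵥ y) - η • c)
      = η • ((1 / η) • (x' - x) + (c - Aᵀ *ᵥ y)) := by
    funext i
    simp only [Pi.sub_apply, Pi.add_apply, Pi.smul_apply, smul_eq_mul]
    field_simp
    ring
  have H1 : 0 ≤ ((1 / η) • (x' - x) + (c - Aᵀ *ᵥ y)) ⬝ᵥ (xh - x') := by
    rw [hvec, smul_dotProduct, smul_eq_mul] at H1raw
    by_contra hcon
    push_neg at hcon
    nlinarith
  have H2 : (1 / η) • (y - y') = A *ᵥ ((2:ℝ) • x' - x) - b := by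
    rw [hy']
    funext i
    simp only [Pi.sub_apply, Pi.add_apply, Pi.smul_apply, smul_eq_mul]
    field_simp
    ring
  have H2s : ((1 / η) • (y - y')) ⬝ᵥ (yh - y')
      = (A *ᵥ ((2:ℝ) • x' - x) - b) ⬝ᵥ (yh - y') := by rw [H2]
  simp only [Lag, Pquad, Matrix.mulVec_add, Matrix.mulVec_sub, Matrix.mulVec_smul,
    add_dotProduct, dotProduct_add, sub_dotProduct, dotProduct_sub,
    smul_dotProduct, dotProduct_smul, smul_eq_mul,
    Matrix.mulVec_transpose, ← Matrix.dotProduct_mulVec]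
    at H1 H2s hq3 ⊢
  simp only [dotProduct_comm] at H1 H2s hq3 ⊢
  ring_nf at H1 H2s hq3 ⊢
  linarith [H1, H2s, hq3]

end helperlemmas

/-- PDHG iterates with `η < 1/‖A‖₂` satisfy, for every `k ≥ 0` and
every `z = (x,y)` with `x ≥ 0`,
`L(xᵏ⁺¹, y) − L(x, yᵏ⁺¹) ≤ ½‖zᵏ − z‖_P² − ½‖zᵏ⁺¹ − z‖_P²`. -/
theorem stmt3 {n m : ℕ} (A : Matrix (Fin m) (Fin n) ℝ) (b : Fin m → ℝ) (c : Fin n → ℝ)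
    (η : ℝ) (hη0 : 0 < η) (hη : η < 1 / specNorm A)
    (z : ℕ → (Fin n → ℝ) × (Fin m → ℝ))
    (hiter : ∀ k : ℕ, z (k + 1) = pdhgStep A b c η (z k)) :
    ∀ k : ℕ, ∀ w : (Fin n → ℝ) × (Fin m → ℝ), (∀ i, 0 ≤ w.1 i) →
      Lag A b c (z (k + 1)).1 w.2 - Lag A b c w.1 (z (k + 1)).2 ≤
        (1 / 2) * (Pnorm A η (z k - w)) ^ 2 - (1 / 2) * (Pnorm A η (z (k + 1) - w)) ^ 2 := by
  have hs0 : 0 < specNorm A := by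
    by_contra h
    push_neg at h
    have h2 : 1 / specNorm A ≤ 0 := one_div_nonpos.mpr h
    linarith
  have hs : specNorm A < 1 / η := by
    have h1 : η * specNorm A < 1 := (lt_div_iff₀ hs0).mp hη
    rw [lt_div_iff₀ hη0, mul_comm]
    exact h1
  intro k w hw
  have h := core' A b c η hη0 hs (z k).1 w.1 (z k).2 w.2 hw
  rw [show ((z k).1, (z k).2) = z k from rfl,
    show ((w.1, w.2) : (Fin n → ℝ) × (Fin m → ℝ)) = w from rfl, ← hiter k] at h
  exact h
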